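/- Let A be an n×n completely positive matrix. Then τ_cp(A) is at least the fractional edge-clique cover number of the graph G(A): τ_cp(A) ≥ c_frac(G(A)). -/

import Mathlib

open Matrix

open scoped InnerProductSpace


section Farkas

variable {E : Type*} {κ : Type*} [Fintype κ]

/-- Conic Carathéodory: any conic combination can be rewritten with linearly
independent support. -/
lemma cone_rep_linIndep [AddCommGroup E] [Module ℝ E] (v : κ → E) (c : κ → ℝ)
    (hc : ∀ i, 0 ≤ c i) :
    ∃ c' : κ → ℝ, (∀ i, 0 ≤ c' i) ∧ ∑ i, c' i • v i = ∑ i, c i • v i ∧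
      LinearIndependent ℝ (fun i : {i : κ // c' i ≠ 0} => v i) := by
  classical
  suffices H : ∀ N : ℕ, ∀ c : κ → ℝ, (Finset.univ.filter fun i => c i ≠ 0).card ≤ N →
      (∀ i, 0 ≤ c i) →
      ∃ c' : κ → ℝ, (∀ i, 0 ≤ c' i) ∧ ∑ i, c' i • v i = ∑ i, c i • v i ∧
        LinearIndependent ℝ (fun i : {i : κ // c' i ≠ 0} => v i) by
    exact H _ c le_rfl hc
  intro N
  induction N with
  | zero =>
    intro c hcard hc
    refine ⟨c, hc, rfl, ?_⟩
    have hempty : ∀ i, c i = 0 := by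
      intro i
      by_contra hi
      have : i ∈ Finset.univ.filter fun i => c i ≠ 0 := by simp [hi]
      have := Finset.card_pos.mpr ⟨i, this⟩
      omega
    have : IsEmpty {i : κ // c i ≠ 0} := ⟨fun ⟨i, hi⟩ => hi (hempty i)⟩
    exact linearIndependent_empty_type
  | succ N ih =>
    intro c hcard hc
    by_cases hli : LinearIndependent ℝ (fun i : {i : κ // c i ≠ 0} => v i)
    · exact ⟨c, hc, rfl, hli⟩
    · -- get a dependence relation supported in the support of c
      obtain ⟨g, hg0, i₀', hgne⟩ := Fintype.not_linearIndependent_iff.mp hli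
      have key : ∀ d : κ → ℝ, (∀ i, c i = 0 → d i = 0) → ∑ i, d i • v i = 0 →
          (∃ i, 0 < d i) →
          ∃ c' : κ → ℝ, (∀ i, 0 ≤ c' i) ∧ ∑ i, c' i • v i = ∑ i, c i • v i ∧
            LinearIndependent ℝ (fun i : {i : κ // c' i ≠ 0} => v i) := by
        intro d hsupp hdsum ⟨ip, hip⟩
        set T : Finset κ := Finset.univ.filter fun i => 0 < d i with hT
        have hTne : T.Nonempty := ⟨ip, by simp [hT, hip]⟩
        set t : ℝ := T.inf' hTne fun i => c i / d i with ht
        obtain ⟨i₀, hi₀T, hi₀⟩ := Finset.exists_mem_eq_inf' hTne fun i => c i / d i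
        have hdi₀ : 0 < d i₀ := by simpa [hT] using hi₀T
        have htnn : 0 ≤ t := by
          rw [← ht] at hi₀
          rw [hi₀]
          exact div_nonneg (hc i₀) hdi₀.le
        set c' : κ → ℝ := fun i => c i - t * d i with hc'
        have hc'nn : ∀ i, 0 ≤ c' i := by
          intro i
          by_cases hdi : 0 < d i
          · have : t ≤ c i / d i := Finset.inf'_le _ (by simp [hT, hdi])
            have := (le_div_iff₀ hdi).mp this
            simp only [hc']
            linarith
          · push_neg at hdi
            have : t * d i ≤ 0 := mul_nonpos_of_nonneg_of_nonpos htnn hdi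
            have := hc i
            simp only [hc']
            linarith
        have hsum : ∑ i, c' i • v i = ∑ i, c i • v i := by
          simp only [hc', sub_smul, Finset.sum_sub_distrib, mul_smul]
          rw [← Finset.smul_sum, hdsum, smul_zero, sub_zero]
        have hci₀ : c i₀ ≠ 0 := fun h => by
          have := hsupp i₀ h; rw [this] at hdi₀; exact lt_irrefl 0 hdi₀
        have hc'i₀ : c' i₀ = 0 := by
          rw [← ht] at hi₀
          simp only [hc', hi₀, div_mul_cancel₀ _ (ne_of_gt hdi₀), sub_self]
        have hsub : (Finset.univ.filter fun i => c' i ≠ 0) ⊆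
            (Finset.univ.filter fun i => c i ≠ 0).erase i₀ := by
          intro i hi
          simp only [Finset.mem_filter, Finset.mem_univ, true_and] at hi
          refine Finset.mem_erase.mpr ⟨?_, ?_⟩
          · rintro rfl; exact hi hc'i₀
          · simp only [Finset.mem_filter, Finset.mem_univ, true_and]
            intro h
            exact hi (by simp [hc', h, hsupp i h])
        have hcard' : (Finset.univ.filter fun i => c' i ≠ 0).card ≤ N := by
          have h1 := Finset.card_le_card hsub
          have h2 : ((Finset.univ.filter fun i => c i ≠ 0).erase i₀).card <
              (Finset.univ.filter fun i => c i ≠ 0).card :=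
            Finset.card_erase_lt_of_mem (by simp [hci₀])
          omega
        obtain ⟨c'', h1, h2, h3⟩ := ih c' hcard' hc'nn
        exact ⟨c'', h1, h2.trans hsum, h3⟩
      -- build d from g
      set d : κ → ℝ := fun i => if h : c i ≠ 0 then g ⟨i, h⟩ else 0 with hd
      have hsupp : ∀ i, c i = 0 → d i = 0 := by
        intro i hi; simp [hd, hi]
      have hdsum : ∑ i, d i • v i = 0 := by
        rw [← hg0]
        calc ∑ i, d i • v i
            = ∑ i ∈ Finset.univ.filter (fun i => c i ≠ 0), d i • v i := by
              refine (Finset.sum_subset (Finset.subset_univ _) ?_).symm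
              intro i _ hi
              simp only [Finset.mem_filter, Finset.mem_univ, true_and, not_not] at hi
              simp [hsupp i hi]
          _ = ∑ a : {i : κ // c i ≠ 0}, d ↑a • v ↑a :=
              Finset.sum_subtype _ (by simp) (fun i => d i • v i)
          _ = ∑ a : {i : κ // c i ≠ 0}, g a • v ↑a := by
              refine Finset.sum_congr rfl fun a _ => ?_
              simp [hd, a.prop]
      by_cases hpos : ∃ i, 0 < d i
      · exact key d hsupp hdsum hpos
      · push_neg at hpos
        refine key (fun i => -d i) (fun i hi => by simp [hsupp i hi]) ?_ ?_
        · simp only [neg_smul, Finset.sum_neg_distrib, hdsum, neg_zero]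
        · refine ⟨i₀', ?_⟩
          have h1 := hpos i₀'
          have h2 : d ↑i₀' = g i₀' := by simp [hd, i₀'.prop]
          have : d ↑i₀' ≠ 0 := by rw [h2]; exact hgne
          have h3 : d ↑i₀' < 0 := lt_of_le_of_ne h1 this
          show 0 < -d ↑i₀'
          linarith

/-- The conic hull of finitely many vectors is closed. -/
lemma isClosed_coneHull [NormedAddCommGroup E] [NormedSpace ℝ E] [FiniteDimensional ℝ E]
    (v : κ → E) :
    IsClosed {z : E | ∃ c : κ → ℝ, (∀ i, 0 ≤ c i) ∧ z = ∑ i, c i • v i} := by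
  classical
  have hmain : {z : E | ∃ c : κ → ℝ, (∀ i, 0 ≤ c i) ∧ z = ∑ i, c i • v i} =
      ⋃ (I : Finset κ),
        if LinearIndependent ℝ (fun i : {x : κ // x ∈ I} => v i) then
          (fun c : {x : κ // x ∈ I} → ℝ => ∑ i, c i • v (i : κ)) '' {c | ∀ i, 0 ≤ c i}
        else ∅ := by
    ext z
    simp only [Set.mem_iUnion, Set.mem_setOf_eq]
    constructor
    · rintro ⟨c, hc, rfl⟩
      obtain ⟨c', hc', hsum, hli⟩ := cone_rep_linIndep v c hc
      refine ⟨Finset.univ.filter fun i => c' i ≠ 0, ?_⟩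
      have hli' : LinearIndependent ℝ
          (fun i : {x : κ // x ∈ Finset.univ.filter fun i => c' i ≠ 0} => v i) := by
        have h2 := hli.comp
          (fun x : {x : κ // x ∈ Finset.univ.filter fun i => c' i ≠ 0} =>
            (⟨x.1, (Finset.mem_filter.mp x.2).2⟩ : {i : κ // c' i ≠ 0}))
          (fun a b hab => by
            simp only [Subtype.mk.injEq] at hab
            exact Subtype.ext hab)
        exact h2
      rw [if_pos hli']
      refine ⟨fun i => c' (i : κ), fun i => hc' _, ?_⟩
      calc (∑ i : {x : κ // x ∈ Finset.univ.filter fun i => c' i ≠ 0}, c' (i : κ) • v (i : κ))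
          = ∑ i ∈ Finset.univ.filter fun i => c' i ≠ 0, c' i • v i :=
            (Finset.sum_subtype _ (by simp) (fun i => c' i • v i)).symm
        _ = ∑ i, c' i • v i := by
            refine Finset.sum_subset (Finset.subset_univ _) ?_
            intro i _ hi
            simp only [Finset.mem_filter, Finset.mem_univ, true_and, not_not] at hi
            simp [hi]
        _ = ∑ i, c i • v i := hsum
    · rintro ⟨I, hz⟩
      by_cases hli : LinearIndependent ℝ (fun i : {x : κ // x ∈ I} => v i)
      · rw [if_pos hli] at hz
        obtain ⟨c, hc, rfl⟩ := hz
        refine ⟨fun i => if h : i ∈ I then c ⟨i, h⟩ else 0, ?_, ?_⟩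
        · intro i
          by_cases h : i ∈ I
          · simp only [dif_pos h]
            exact hc ⟨i, h⟩
          · simp [h]
        · calc (∑ i : {x : κ // x ∈ I}, c i • v (i : κ))
              = ∑ i : {x : κ // x ∈ I}, (if h : (i : κ) ∈ I then c ⟨i, h⟩ else 0) • v (i : κ) := by
                refine Finset.sum_congr rfl fun i _ => ?_
                rw [dif_pos i.prop]
            _ = ∑ i ∈ I, (if h : i ∈ I then c ⟨i, h⟩ else 0) • v i :=
                (Finset.sum_subtype I (p := fun x => x ∈ I) (fun _ => Iff.rfl)
                  (fun i => (if h : i ∈ I then c ⟨i, h⟩ else 0) • v i)).symm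
            _ = ∑ i, (if h : i ∈ I then c ⟨i, h⟩ else 0) • v i := by
                refine Finset.sum_subset (Finset.subset_univ _) ?_
                intro i _ hi
                simp [hi]
      · rw [if_neg hli] at hz
        exact absurd hz (Set.notMem_empty _)
  rw [hmain]
  refine isClosed_iUnion_of_finite fun I => ?_
  by_cases hli : LinearIndependent ℝ (fun i : {x : κ // x ∈ I} => v i)
  · rw [if_pos hli]
    set φ : ({x : κ // x ∈ I} → ℝ) →ₗ[ℝ] E :=
      { toFun := fun c => ∑ i, c i • v (i : κ)
        map_add' := by
          intro a b
          simp [add_smul, Finset.sum_add_distrib]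
        map_smul' := by
          intro r a
          simp [smul_smul, Finset.smul_sum] } with hφ
    have hker : LinearMap.ker φ = ⊥ := by
      rw [LinearMap.ker_eq_bot']
      intro c hcz
      have := Fintype.linearIndependent_iff.mp hli c hcz
      funext i
      exact this i
    have hemb := LinearMap.isClosedEmbedding_of_injective hker
    have hcl : IsClosed {c : {x : κ // x ∈ I} → ℝ | ∀ i, 0 ≤ c i} := by
      have : {c : {x : κ // x ∈ I} → ℝ | ∀ i, 0 ≤ c i} =
          ⋂ i, {c : {x : κ // x ∈ I} → ℝ | 0 ≤ c i} := by
        ext c; simp [Set.mem_iInter]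
      rw [this]
      exact isClosed_iInter fun i => isClosed_le continuous_const (continuous_apply i)
    exact hemb.isClosedMap _ hcl
  · rw [if_neg hli]
    exact isClosed_empty

/-- Farkas' lemma. -/
lemma farkas_cone [NormedAddCommGroup E] [InnerProductSpace ℝ E] [FiniteDimensional ℝ E]
    (v : κ → E) (b : E)
    (h : ∀ z : E, (∀ i, 0 ≤ ⟪v i, z⟫_ℝ) → 0 ≤ ⟪b, z⟫_ℝ) :
    ∃ c : κ → ℝ, (∀ i, 0 ≤ c i) ∧ b = ∑ i, c i • v i := by
  classical
  by_contra hb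
  set K : ConvexCone ℝ E :=
    { carrier := {z : E | ∃ c : κ → ℝ, (∀ i, 0 ≤ c i) ∧ z = ∑ i, c i • v i}
      smul_mem' := by
        rintro r hr z ⟨c, hc, rfl⟩
        refine ⟨fun i => r * c i, fun i => mul_nonneg hr.le (hc i), ?_⟩
        rw [Finset.smul_sum]
        refine Finset.sum_congr rfl fun i _ => ?_
        rw [smul_smul]
      add_mem' := by
        rintro z ⟨c, hc, rfl⟩ z' ⟨c', hc', rfl⟩
        refine ⟨fun i => c i + c' i, fun i => add_nonneg (hc i) (hc' i), ?_⟩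
        rw [← Finset.sum_add_distrib]
        refine Finset.sum_congr rfl fun i _ => ?_
        rw [add_smul] } with hK
  have hKne : (K : Set E).Nonempty := ⟨0, ⟨fun _ => 0, fun _ => le_rfl, by simp⟩⟩
  have hKcl : IsClosed (K : Set E) := isClosed_coneHull v
  have hbK : b ∉ K := fun hbm => hb hbm
  obtain ⟨y, hy1, hy2⟩ : ∃ y : E, (∀ x ∈ (K : Set E), 0 ≤ ⟪x, y⟫_ℝ) ∧ ⟪y, b⟫_ℝ < 0 := by
    let P : ProperCone ℝ E :=
      { carrier := K
        add_mem' := fun ha hb => K.add_mem ha hb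
        zero_mem' := ⟨fun _ => 0, fun _ => le_rfl, by simp⟩
        smul_mem' := fun c x hx => by
          rcases c.2.eq_or_lt with h | h
          · rw [show c = 0 from Subtype.ext h.symm, zero_smul]
            exact ⟨fun _ => 0, fun _ => le_rfl, by simp⟩
          · exact K.smul_mem h hx
        isClosed' := hKcl }
    obtain ⟨y, h1, h2⟩ := ProperCone.hyperplane_separation' P (x₀ := b) hbK
    exact ⟨y, h1, by rw [real_inner_comm]; exact h2⟩
  have hvy : ∀ i, 0 ≤ ⟪v i, y⟫_ℝ := by
    intro i
    refine hy1 (v i) ⟨fun j => if j = i then 1 else 0, fun j => by positivity, ?_⟩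
    simp [ite_smul]
  have := h y hvy
  rw [real_inner_comm] at hy2
  linarith

end Farkas

lemma euclid_coord {ι κ : Type*} [Fintype ι] [Fintype κ]
    (v : κ → EuclideanSpace ℝ ι) (c : κ → ℝ) (q : ι) :
    (∑ k, c k • v k) q = ∑ k, c k * v k q := by
  rw [WithLp.ofLp_sum, Finset.sum_apply]
  simp [PiLp.smul_apply]

lemma inner_mk {ι : Type*} [Fintype ι] (f g : ι → ℝ) :
    ⟪(WithLp.equiv 2 (ι → ℝ)).symm f, (WithLp.equiv 2 (ι → ℝ)).symm g⟫_ℝ = ∑ q, f q * g q := by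
  simp [PiLp.inner_apply, RCLike.inner_apply, WithLp.equiv_symm_apply, mul_comm]

/-- The set of atoms `𝒜_cp(A)`: rank-at-most-one matrices `R` with `0 ≤ R ≤ A`
entrywise and `0 ⪯ R ⪯ A` in the Loewner order. -/
noncomputable def Acp {n : ℕ} (A : Matrix (Fin n) (Fin n) ℝ) :
    Set (Matrix (Fin n) (Fin n) ℝ) :=
  {R | R.rank ≤ 1 ∧ (∀ i j, 0 ≤ R i j ∧ R i j ≤ A i j) ∧
    R.PosSemidef ∧ (A - R).PosSemidef}

/-- `τ_cp(A)`: supremum of `L(A)` over linear functionals `L` with `L ≤ 1` on `𝒜_cp(A)`. -/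
noncomputable def tauCp {n : ℕ} (A : Matrix (Fin n) (Fin n) ℝ) : ℝ :=
  sSup {x | ∃ L : Matrix (Fin n) (Fin n) ℝ →ₗ[ℝ] ℝ, (∀ R ∈ Acp A, L R ≤ 1) ∧ L A = x}


section Main

variable {n : ℕ}

/-- A rank-at-most-one symmetric matrix satisfies the minor identity. -/
lemma minor_eq {n : ℕ} (R : Matrix (Fin n) (Fin n) ℝ) (hrank : R.rank ≤ 1) :
    ∀ i j, R i j * R j i = R i i * R j j := by
  classical
  obtain ⟨v₀, hv₀⟩ := finrank_le_one_iff.mp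
    (show Module.finrank ℝ ↥(LinearMap.range R.mulVecLin) ≤ 1 from hrank)
  have hcol : ∀ j : Fin n, ∃ c : ℝ, ∀ i, R i j = c * (v₀ : Fin n → ℝ) i := by
    intro j
    have hmem : R.mulVec (Pi.single j 1) ∈ LinearMap.range R.mulVecLin :=
      ⟨Pi.single j 1, rfl⟩
    obtain ⟨c, hc⟩ := hv₀ ⟨_, hmem⟩
    refine ⟨c, fun i => ?_⟩
    have h1 : R.mulVec (Pi.single j 1) i = R i j := by simp [Matrix.mulVec_single]
    have h2 : (c • v₀ : ↥(LinearMap.range R.mulVecLin)).val i =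
        R.mulVec (Pi.single j 1) i := by rw [hc]
    have h3 : (c • v₀ : ↥(LinearMap.range R.mulVecLin)).val i =
        c * (v₀ : Fin n → ℝ) i := rfl
    rw [← h1, ← h2, h3]
  choose c hc using hcol
  intro i j
  rw [hc j i, hc i j, hc i i, hc j j]
  ring

/-- Each rank-one term of a cp decomposition is an atom. -/
lemma atom_mem_Acp {n : ℕ} {r : ℕ} (a : Fin r → Fin n → ℝ) (ha : ∀ i k, 0 ≤ a i k)
    {A : Matrix (Fin n) (Fin n) ℝ} (hA : A = ∑ i, Matrix.vecMulVec (a i) (a i)) (i : Fin r) :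
    Matrix.vecMulVec (a i) (a i) ∈ Acp A := by
  classical
  have hpsd : ∀ m : Fin r, (Matrix.vecMulVec (a m) (a m)).PosSemidef := by
    intro m
    refine Matrix.PosSemidef.of_dotProduct_mulVec_nonneg ?_ ?_
    · ext k l
      simp [Matrix.conjTranspose_apply, Matrix.vecMulVec_apply, mul_comm]
    · intro x
      have hmv : (Matrix.vecMulVec (a m) (a m)).mulVec x = (a m ⬝ᵥ x) • a m := by
        ext k
        simp only [Matrix.mulVec, Matrix.vecMulVec_apply, dotProduct, Pi.smul_apply,
          smul_eq_mul, Finset.sum_mul, Finset.mul_sum]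
        refine Finset.sum_congr rfl fun l _ => by ring
      rw [hmv, dotProduct_smul]
      have : star x ⬝ᵥ a m = a m ⬝ᵥ x := by
        simp [dotProduct_comm, star_trivial]
      rw [this, smul_eq_mul]
      exact mul_self_nonneg _
  refine ⟨?_, ?_, hpsd i, ?_⟩
  · -- rank ≤ 1
    show Module.finrank ℝ ↥(LinearMap.range (Matrix.vecMulVec (a i) (a i)).mulVecLin) ≤ 1
    have hsub : LinearMap.range (Matrix.vecMulVec (a i) (a i)).mulVecLin ≤
        Submodule.span ℝ {a i} := by
      rintro y ⟨x, rfl⟩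
      have hmv : (Matrix.vecMulVec (a i) (a i)).mulVecLin x = (a i ⬝ᵥ x) • a i := by
        ext k
        simp only [Matrix.mulVecLin_apply, Matrix.mulVec, Matrix.vecMulVec_apply,
          dotProduct, Pi.smul_apply, smul_eq_mul, Finset.sum_mul, Finset.mul_sum]
        refine Finset.sum_congr rfl fun l _ => by ring
      rw [hmv]
      exact Submodule.smul_mem _ _ (Submodule.mem_span_singleton_self _)
    refine le_trans (Submodule.finrank_mono hsub) ?_
    by_cases hzero : a i = 0
    · rw [hzero, Submodule.span_zero_singleton]
      simp
    · rw [finrank_span_singleton hzero]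
  · -- entrywise bounds
    intro k l
    constructor
    · simp only [Matrix.vecMulVec_apply]
      exact mul_nonneg (ha i k) (ha i l)
    · rw [hA]
      simp only [Matrix.vecMulVec_apply, Matrix.sum_apply]
      exact Finset.single_le_sum (f := fun m => Matrix.vecMulVec (a m) (a m) k l)
        (fun m _ => mul_nonneg (ha m k) (ha m l)) (Finset.mem_univ i)
  · -- A - atom is psd
    have hsum : A - Matrix.vecMulVec (a i) (a i) =
        ∑ m ∈ Finset.univ.erase i, Matrix.vecMulVec (a m) (a m) := by
      rw [hA, ← Finset.sum_erase_add Finset.univ _ (Finset.mem_univ i)]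
      exact add_sub_cancel_right _ _
    rw [hsum]
    exact Finset.sum_induction _ _ (fun _ _ h1 h2 => h1.add h2) Matrix.PosSemidef.zero
      fun m _ => hpsd m

end Main

/-- for a completely positive matrix `A`, `τ_cp(A)` is at least the
fractional edge-clique cover number of the graph `G(A)`: the infimum of the total
weight of nonnegative weights on cliques of `G(A)` fractionally covering its edges
is at most `τ_cp(A)`. -/
theorem stmt19 {n : ℕ} (A : Matrix (Fin n) (Fin n) ℝ)
    (hcp : ∃ (r : ℕ) (a : Fin r → Fin n → ℝ), (∀ i k, 0 ≤ a i k) ∧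
      A = ∑ i, Matrix.vecMulVec (a i) (a i)) :
    sInf {s : ℝ | ∃ x : Finset (Fin n) → ℝ,
      (∀ S, 0 ≤ x S) ∧
      (∀ S, x S ≠ 0 → ∀ i ∈ S, ∀ j ∈ S, 0 < A i j) ∧
      (∀ i j, i ≠ j → 0 < A i j →
        1 ≤ ∑ S : Finset (Fin n), if i ∈ S ∧ j ∈ S then x S else 0) ∧
      s = ∑ S : Finset (Fin n), x S} ≤ tauCp A := by
  classical
  obtain ⟨r, a, ha, hA⟩ := hcp
  -- basic facts about A
  have hAapp : ∀ i j, A i j = ∑ k, a k i * a k j := by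
    intro i j
    rw [hA]
    simp [Matrix.sum_apply, Matrix.vecMulVec_apply]
  have hAnn : ∀ i j, 0 ≤ A i j := fun i j => by
    rw [hAapp]
    exact Finset.sum_nonneg fun k _ => mul_nonneg (ha k i) (ha k j)
  have hAsymm : ∀ i j, A i j = A j i := fun i j => by
    rw [hAapp, hAapp]
    exact Finset.sum_congr rfl fun k _ => mul_comm _ _
  have hdiagpos : ∀ i j, 0 < A i j → 0 < A i i := by
    intro i j hij
    rw [hAapp] at hij
    have hex : ∃ k, 0 < a k i * a k j := by
      by_contra hcon
      push_neg at hcon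
      have : ∑ k, a k i * a k j ≤ 0 := Finset.sum_nonpos fun k _ => hcon k
      linarith
    obtain ⟨k, hk⟩ := hex
    have hki : 0 < a k i := by
      rcases (ha k i).lt_or_eq with h | h
      · exact h
      · rw [← h] at hk; simp at hk
    rw [hAapp]
    calc (0:ℝ) < a k i * a k i := mul_pos hki hki
      _ ≤ ∑ l, a l i * a l i :=
          Finset.single_le_sum (fun l _ => mul_nonneg (ha l i) (ha l i)) (Finset.mem_univ k)
  -- the edge predicate
  set edge : Fin n × Fin n → Prop := fun p => p.1 ≠ p.2 ∧ 0 < A p.1 p.2 with hedge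
  -- the dual feasible region
  set D : Set ((Fin n × Fin n) → ℝ) := {y | (∀ p, 0 ≤ y p) ∧ (∀ p, ¬ edge p → y p = 0) ∧
    ∀ S : Finset (Fin n), (∀ i ∈ S, ∀ j ∈ S, 0 < A i j) →
      ∑ p : Fin n × Fin n, (if p.1 ∈ S ∧ p.2 ∈ S then y p else 0) ≤ 1} with hD
  have hD0 : (0 : (Fin n × Fin n) → ℝ) ∈ D := by
    refine ⟨fun p => le_rfl, fun p _ => rfl, fun S _ => ?_⟩
    simp
  have hDmax : ∃ y ∈ D, IsMaxOn (fun y => ∑ p, y p) D y := by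
    have hDclosed : IsClosed D := by
      have hrw : D = {y : (Fin n × Fin n) → ℝ | ∀ p, 0 ≤ y p} ∩
          ({y | ∀ p, ¬ edge p → y p = 0} ∩
           {y | ∀ S : Finset (Fin n), (∀ i ∈ S, ∀ j ∈ S, 0 < A i j) →
              ∑ p : Fin n × Fin n, (if p.1 ∈ S ∧ p.2 ∈ S then y p else 0) ≤ 1}) := by
        ext y
        simp only [hD, Set.mem_setOf_eq, Set.mem_inter_iff]
      rw [hrw]
      refine IsClosed.inter ?_ (IsClosed.inter ?_ ?_)
      · have : {y : (Fin n × Fin n) → ℝ | ∀ p, 0 ≤ y p} = ⋂ p, {y | 0 ≤ y p} := by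
          ext y; simp
        rw [this]
        exact isClosed_iInter fun p => isClosed_le continuous_const (continuous_apply p)
      · have : {y : (Fin n × Fin n) → ℝ | ∀ p, ¬ edge p → y p = 0} =
            ⋂ p, {y | ¬ edge p → y p = 0} := by ext y; simp
        rw [this]
        refine isClosed_iInter fun p => ?_
        by_cases hp : edge p
        · have heq : {y : (Fin n × Fin n) → ℝ | ¬ edge p → y p = 0} = Set.univ := by
            ext y
            simp only [Set.mem_setOf_eq, Set.mem_univ, iff_true]
            exact fun h => absurd hp h
          rw [heq]
          exact isClosed_univ
        · have heq : {y : (Fin n × Fin n) → ℝ | ¬ edge p → y p = 0} = {y | y p = 0} := by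
            ext y
            simp only [Set.mem_setOf_eq]
            exact ⟨fun h => h hp, fun h _ => h⟩
          rw [heq]
          exact isClosed_eq (continuous_apply p) continuous_const
      · have : {y : (Fin n × Fin n) → ℝ | ∀ S : Finset (Fin n),
            (∀ i ∈ S, ∀ j ∈ S, 0 < A i j) →
              ∑ p : Fin n × Fin n, (if p.1 ∈ S ∧ p.2 ∈ S then y p else 0) ≤ 1} =
            ⋂ S : Finset (Fin n), {y | (∀ i ∈ S, ∀ j ∈ S, 0 < A i j) →
              ∑ p : Fin n × Fin n, (if p.1 ∈ S ∧ p.2 ∈ S then y p else 0) ≤ 1} := by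
          ext y; simp
        rw [this]
        refine isClosed_iInter fun S => ?_
        by_cases hS : ∀ i ∈ S, ∀ j ∈ S, 0 < A i j
        · have heq : {y : (Fin n × Fin n) → ℝ | (∀ i ∈ S, ∀ j ∈ S, 0 < A i j) →
              ∑ p : Fin n × Fin n, (if p.1 ∈ S ∧ p.2 ∈ S then y p else 0) ≤ 1} =
              {y | ∑ p : Fin n × Fin n, (if p.1 ∈ S ∧ p.2 ∈ S then y p else 0) ≤ 1} := by
            ext y
            simp only [Set.mem_setOf_eq]
            exact ⟨fun h => h hS, fun h _ => h⟩
          rw [heq]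
          refine isClosed_le ?_ continuous_const
          refine continuous_finset_sum _ fun p _ => ?_
          by_cases hp : p.1 ∈ S ∧ p.2 ∈ S
          · simp only [hp, if_true]
            exact continuous_apply p
          · simp only [hp, if_false]
            exact continuous_const
        · simp only [hS, false_implies]
          exact isClosed_univ
    have hDsub : D ⊆ Set.Icc 0 1 := by
      intro y hy
      obtain ⟨hynn, hysupp, hycl⟩ := hy
      constructor
      · intro p
        exact hynn p
      · intro p
        by_cases hp : edge p
        · obtain ⟨hne, hpos⟩ := hp
          have hclique : ∀ i ∈ ({p.1, p.2} : Finset (Fin n)),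
              ∀ j ∈ ({p.1, p.2} : Finset (Fin n)), 0 < A i j := by
            intro i hi j hj
            simp only [Finset.mem_insert, Finset.mem_singleton] at hi hj
            have h21 : 0 < A p.2 p.1 := by rw [← hAsymm]; exact hpos
            rcases hi with rfl | rfl <;> rcases hj with rfl | rfl
            · exact hdiagpos _ _ hpos
            · exact hpos
            · exact h21
            · exact hdiagpos _ _ h21
          have hsum := hycl _ hclique
          have hterm : y p ≤ ∑ q : Fin n × Fin n,
              (if q.1 ∈ ({p.1, p.2} : Finset (Fin n)) ∧
                q.2 ∈ ({p.1, p.2} : Finset (Fin n)) then y q else 0) := by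
            have hpmem : (p.1 ∈ ({p.1, p.2} : Finset (Fin n)) ∧
                p.2 ∈ ({p.1, p.2} : Finset (Fin n))) := by simp
            calc y p = (if p.1 ∈ ({p.1, p.2} : Finset (Fin n)) ∧
                p.2 ∈ ({p.1, p.2} : Finset (Fin n)) then y p else 0) := by
                  rw [if_pos hpmem]
              _ ≤ _ := Finset.single_le_sum (f := fun q : Fin n × Fin n =>
                  (if q.1 ∈ ({p.1, p.2} : Finset (Fin n)) ∧
                    q.2 ∈ ({p.1, p.2} : Finset (Fin n)) then y q else 0))
                  (fun q _ => by split_ifs with h; exacts [hynn q, le_rfl])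
                  (Finset.mem_univ p)
          calc y p ≤ _ := hterm
            _ ≤ 1 := hsum
        · rw [hysupp p hp]
          exact zero_le_one
    have hDcpt : IsCompact D := IsCompact.of_isClosed_subset isCompact_Icc hDclosed hDsub
    exact hDcpt.exists_isMaxOn ⟨0, hD0⟩
      (continuous_finset_sum _ fun p _ => continuous_apply p).continuousOn
  obtain ⟨y, hyD, hymax⟩ := hDmax
  obtain ⟨hynn, hysupp, hycl⟩ := hyD
  set d : ℝ := ∑ p, y p with hd
  have hdnn : (0:ℝ) ≤ d := Finset.sum_nonneg fun p _ => hynn p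
  -- the linear functional
  set L : Matrix (Fin n) (Fin n) ℝ →ₗ[ℝ] ℝ :=
    { toFun := fun X => ∑ p : Fin n × Fin n, y p / A p.1 p.2 * X p.1 p.2
      map_add' := by
        intro X Y
        simp only [Matrix.add_apply, mul_add, Finset.sum_add_distrib]
      map_smul' := by
        intro m X
        simp only [Matrix.smul_apply, smul_eq_mul, RingHom.id_apply]
        rw [Finset.mul_sum]
        exact Finset.sum_congr rfl fun p _ => by ring } with hL
  have hLapp : ∀ X, L X = ∑ p : Fin n × Fin n, y p / A p.1 p.2 * X p.1 p.2 := fun X => rfl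
  have hLfeas : ∀ R ∈ Acp A, L R ≤ 1 := by
    rintro R ⟨hrank, hent, hpsd, hARpsd⟩
    have hminor := minor_eq R hrank
    have hsym : ∀ i j, R j i = R i j := by
      intro i j
      have := hpsd.1.apply i j
      simpa using this
    have hsq : ∀ i j, R i j * R i j = R i i * R j j := by
      intro i j
      have h := hminor i j
      rw [hsym i j] at h
      exact h
    set S : Finset (Fin n) := Finset.univ.filter fun i => R i i ≠ 0 with hS
    have hmemS : ∀ i, i ∈ S ↔ R i i ≠ 0 := by intro i; simp [hS]
    have hclique : ∀ i ∈ S, ∀ j ∈ S, 0 < A i j := by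
      intro i hi j hj
      rw [hmemS] at hi hj
      have hii : 0 < R i i := lt_of_le_of_ne (hent i i).1 (Ne.symm hi)
      have hjj : 0 < R j j := lt_of_le_of_ne (hent j j).1 (Ne.symm hj)
      have hsqpos : 0 < R i j * R i j := by
        rw [hsq i j]
        exact mul_pos hii hjj
      have hij : 0 < R i j := by
        rcases (hent i j).1.lt_or_eq with h | h
        · exact h
        · rw [← h] at hsqpos
          simp at hsqpos
      exact lt_of_lt_of_le hij (hent i j).2
    have hzero : ∀ i j, R i i = 0 → R i j = 0 := by
      intro i j h
      have h2 := hsq i j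
      rw [h, zero_mul] at h2
      exact mul_self_eq_zero.mp h2
    rw [hLapp]
    calc ∑ p : Fin n × Fin n, y p / A p.1 p.2 * R p.1 p.2
        ≤ ∑ p : Fin n × Fin n, (if p.1 ∈ S ∧ p.2 ∈ S then y p else 0) := by
          refine Finset.sum_le_sum fun p _ => ?_
          by_cases hmem : p.1 ∈ S ∧ p.2 ∈ S
          · rw [if_pos hmem]
            by_cases hp : edge p
            · have hApos : 0 < A p.1 p.2 := hp.2
              have h1 : R p.1 p.2 ≤ A p.1 p.2 := (hent _ _).2
              calc y p / A p.1 p.2 * R p.1 p.2 ≤ y p / A p.1 p.2 * A p.1 p.2 :=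
                    mul_le_mul_of_nonneg_left h1 (div_nonneg (hynn p) hApos.le)
                _ = y p := div_mul_cancel₀ _ (ne_of_gt hApos)
            · rw [hysupp p hp]
              simp [(hent p.1 p.2).1]
          · rw [if_neg hmem]
            have hR0 : R p.1 p.2 = 0 := by
              rcases not_and_or.mp hmem with h | h
              · rw [hmemS p.1] at h
                exact hzero _ _ (not_not.mp h)
              · rw [hmemS p.2] at h
                rw [← hsym p.1 p.2]
                exact hzero _ _ (not_not.mp h)
            rw [hR0, mul_zero]
      _ ≤ 1 := hycl S hclique
  have hLA : L A = d := by
    rw [hLapp, hd]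
    refine Finset.sum_congr rfl fun p _ => ?_
    by_cases hp : edge p
    · exact div_mul_cancel₀ _ (ne_of_gt hp.2)
    · rw [hysupp p hp]
      simp
  have hd_le : d ≤ tauCp A := by
    have hbddT : BddAbove {x : ℝ | ∃ L' : Matrix (Fin n) (Fin n) ℝ →ₗ[ℝ] ℝ,
        (∀ R ∈ Acp A, L' R ≤ 1) ∧ L' A = x} := by
      refine ⟨(r : ℝ), ?_⟩
      rintro x ⟨L', hL'f, rfl⟩
      calc L' A = ∑ i, L' (Matrix.vecMulVec (a i) (a i)) := by rw [hA, map_sum]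
        _ ≤ ∑ _i : Fin r, (1 : ℝ) :=
            Finset.sum_le_sum fun i _ => hL'f _ (atom_mem_Acp a ha hA i)
        _ = r := by simp
    exact le_csSup hbddT ⟨L, hLfeas, hLA⟩
  -- the primal solution via Farkas
  have hex : ∃ x : Finset (Fin n) → ℝ,
      (∀ S, 0 ≤ x S) ∧
      (∀ S, x S ≠ 0 → ∀ i ∈ S, ∀ j ∈ S, 0 < A i j) ∧
      (∀ i j, i ≠ j → 0 < A i j →
        1 ≤ ∑ S : Finset (Fin n), if i ∈ S ∧ j ∈ S then x S else 0) ∧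
      ∑ S : Finset (Fin n), x S ≤ d := by
    set mk : (((Fin n × Fin n) ⊕ Unit) → ℝ) → EuclideanSpace ℝ ((Fin n × Fin n) ⊕ Unit) :=
      fun f => (WithLp.equiv 2 ((((Fin n × Fin n) ⊕ Unit)) → ℝ)).symm f with hmk
    have hinner : ∀ (f : ((Fin n × Fin n) ⊕ Unit) → ℝ)
        (z : EuclideanSpace ℝ ((Fin n × Fin n) ⊕ Unit)),
        ⟪mk f, z⟫_ℝ = ∑ q, f q * z q := by
      intro f z
      exact inner_mk f (fun q => z q)
    set clique : Finset (Fin n) → Prop := fun S => ∀ i ∈ S, ∀ j ∈ S, 0 < A i j with hclq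
    set v : (Finset (Fin n) ⊕ ((Fin n × Fin n) ⊕ Unit)) →
        EuclideanSpace ℝ ((Fin n × Fin n) ⊕ Unit) :=
      Sum.elim
        (fun S => if clique S then
          mk (Sum.elim (fun p => if edge p ∧ p.1 ∈ S ∧ p.2 ∈ S then 1 else 0) (fun _ => 1))
          else mk (fun _ => 0))
        (Sum.elim
          (fun p => mk (Sum.elim (fun q => if q = p then (-1 : ℝ) else 0) (fun _ => 0)))
          (fun _ => mk (Sum.elim (fun _ => 0) (fun _ => 1)))) with hv
    set b : EuclideanSpace ℝ ((Fin n × Fin n) ⊕ Unit) :=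
      mk (Sum.elim (fun p => if edge p then 1 else 0) (fun _ => d)) with hb
    -- the key hypothesis for Farkas
    have hfk : ∀ z : EuclideanSpace ℝ ((Fin n × Fin n) ⊕ Unit),
        (∀ k, 0 ≤ ⟪v k, z⟫_ℝ) → 0 ≤ ⟪b, z⟫_ℝ := by
      intro z hz
      set lam : ℝ := z (Sum.inr ()) with hlam
      set y' : Fin n × Fin n → ℝ := fun p => -(z (Sum.inl p)) with hy'
      have hy'nn : ∀ p, 0 ≤ y' p := by
        intro p
        have h0 := hz (Sum.inr (Sum.inl p))
        rw [hv] at h0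
        simp only [Sum.elim_inl, Sum.elim_inr] at h0
        rw [hinner, Fintype.sum_sum_type] at h0
        simp only [Sum.elim_inl, Sum.elim_inr, ite_mul, neg_mul, one_mul, zero_mul,
          Finset.sum_ite_eq', Finset.mem_univ, if_true, Finset.sum_const_zero, add_zero] at h0
        simpa [hy'] using h0
      have hlamnn : 0 ≤ lam := by
        have h0 := hz (Sum.inr (Sum.inr ()))
        rw [hv] at h0
        simp only [Sum.elim_inl, Sum.elim_inr] at h0
        rw [hinner, Fintype.sum_sum_type] at h0
        simpa [hlam] using h0
      have hcliquebound : ∀ S : Finset (Fin n), clique S →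
          ∑ p : Fin n × Fin n, (if edge p ∧ p.1 ∈ S ∧ p.2 ∈ S then y' p else 0) ≤ lam := by
        intro S hS
        have h0 := hz (Sum.inl S)
        rw [hv] at h0
        simp only [Sum.elim_inl, if_pos hS] at h0
        rw [hinner, Fintype.sum_sum_type] at h0
        simp only [Sum.elim_inl, Sum.elim_inr, ite_mul, one_mul, zero_mul] at h0
        have hrw : ∀ p : Fin n × Fin n,
            (if edge p ∧ p.1 ∈ S ∧ p.2 ∈ S then z (Sum.inl p) else 0) =
            -(if edge p ∧ p.1 ∈ S ∧ p.2 ∈ S then y' p else 0) := by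
          intro p
          by_cases h : edge p ∧ p.1 ∈ S ∧ p.2 ∈ S
          · rw [if_pos h, if_pos h, hy']
            dsimp only
            rw [neg_neg]
          · rw [if_neg h, if_neg h, neg_zero]
        rw [Finset.sum_congr rfl fun p _ => hrw p, Finset.sum_neg_distrib] at h0
        have hunit : ∑ x : Unit, z (Sum.inr x) = lam := by
          rw [hlam]
          exact Fintype.sum_unique _
        rw [hunit] at h0
        linarith
      -- the goal
      rw [hb, hinner, Fintype.sum_sum_type]
      simp only [Sum.elim_inl, Sum.elim_inr, ite_mul, one_mul, zero_mul]
      have hrw2 : ∀ p : Fin n × Fin n,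
          (if edge p then z (Sum.inl p) else 0) = -(if edge p then y' p else 0) := by
        intro p
        by_cases h : edge p
        · rw [if_pos h, if_pos h, hy']
          dsimp only
          rw [neg_neg]
        · rw [if_neg h, if_neg h, neg_zero]
      rw [Finset.sum_congr rfl fun p _ => hrw2 p, Finset.sum_neg_distrib]
      have hunit2 : ∑ x : Unit, d * z (Sum.inr x) = d * lam := by
        rw [hlam]
        exact Fintype.sum_unique _
      rw [hunit2]
      have hmain : ∑ p : Fin n × Fin n, (if edge p then y' p else 0) ≤ d * lam := by
        rcases hlamnn.lt_or_eq with hpos | hzero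
        · -- positive multiplier: rescale to a dual feasible point
          set w : Fin n × Fin n → ℝ := fun p => if edge p then y' p / lam else 0 with hw
          have hwD : w ∈ D := by
            refine ⟨?_, ?_, ?_⟩
            · intro p
              rw [hw]
              dsimp only
              split_ifs with h
              · exact div_nonneg (hy'nn p) hlamnn
              · exact le_rfl
            · intro p hp
              rw [hw]
              dsimp only
              rw [if_neg hp]
            · intro S hS
              have hterm : ∀ p : Fin n × Fin n,
                  (if p.1 ∈ S ∧ p.2 ∈ S then w p else 0) =
                  (if edge p ∧ p.1 ∈ S ∧ p.2 ∈ S then y' p else 0) / lam := by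
                intro p
                rw [hw]
                dsimp only
                by_cases h1 : p.1 ∈ S ∧ p.2 ∈ S
                · by_cases h2 : edge p
                  · rw [if_pos h1, if_pos h2, if_pos ⟨h2, h1⟩]
                  · rw [if_pos h1, if_neg h2, if_neg (fun hc => h2 hc.1), zero_div]
                · rw [if_neg h1, if_neg (fun hc => h1 hc.2), zero_div]
              rw [Finset.sum_congr rfl fun p _ => hterm p, ← Finset.sum_div]
              rw [div_le_one hpos]
              exact le_trans (hcliquebound S hS) le_rfl
          have hwsum := hymax hwD
          have hws : ∑ p, w p =
              (∑ p : Fin n × Fin n, (if edge p then y' p else 0)) / lam := by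
            rw [Finset.sum_div]
            refine Finset.sum_congr rfl fun p _ => ?_
            rw [hw]
            dsimp only
            by_cases h : edge p
            · rw [if_pos h, if_pos h]
            · rw [if_neg h, if_neg h, zero_div]
          have : (∑ p : Fin n × Fin n, (if edge p then y' p else 0)) / lam ≤ d := by
            rw [← hws]
            simpa [hd] using hwsum
          calc ∑ p : Fin n × Fin n, (if edge p then y' p else 0)
              = (∑ p : Fin n × Fin n, (if edge p then y' p else 0)) / lam * lam := by
                rw [div_mul_cancel₀ _ (ne_of_gt hpos)]
            _ ≤ d * lam := mul_le_mul_of_nonneg_right this hlamnn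
        · -- zero multiplier: every edge weight vanishes
          rw [← hzero, mul_zero]
          refine Finset.sum_nonpos fun p _ => ?_
          by_cases hp : edge p
          · rw [if_pos hp]
            obtain ⟨hne, hposA⟩ := hp
            have hclique2 : clique {p.1, p.2} := by
              intro i hi j hj
              simp only [Finset.mem_insert, Finset.mem_singleton] at hi hj
              have h21 : 0 < A p.2 p.1 := by rw [← hAsymm]; exact hposA
              rcases hi with rfl | rfl <;> rcases hj with rfl | rfl
              · exact hdiagpos _ _ hposA
              · exact hposA
              · exact h21
              · exact hdiagpos _ _ h21
            have hsum2 := hcliquebound _ hclique2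
            rw [← hzero] at hsum2
            have hple : y' p ≤ ∑ q : Fin n × Fin n,
                (if edge q ∧ q.1 ∈ ({p.1, p.2} : Finset (Fin n)) ∧
                  q.2 ∈ ({p.1, p.2} : Finset (Fin n)) then y' q else 0) := by
              have hpm : edge p ∧ p.1 ∈ ({p.1, p.2} : Finset (Fin n)) ∧
                  p.2 ∈ ({p.1, p.2} : Finset (Fin n)) := ⟨⟨hne, hposA⟩, by simp, by simp⟩
              calc y' p = (if edge p ∧ p.1 ∈ ({p.1, p.2} : Finset (Fin n)) ∧
                  p.2 ∈ ({p.1, p.2} : Finset (Fin n)) then y' p else 0) := by rw [if_pos hpm]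
                _ ≤ _ := Finset.single_le_sum
                    (f := fun q : Fin n × Fin n => if edge q ∧
                      q.1 ∈ ({p.1, p.2} : Finset (Fin n)) ∧
                      q.2 ∈ ({p.1, p.2} : Finset (Fin n)) then y' q else 0)
                    (fun q _ => by split_ifs; exacts [hy'nn q, le_rfl])
                    (Finset.mem_univ p)
            linarith
          · rw [if_neg hp]
      linarith
    obtain ⟨c, hcnn, hcb⟩ := farkas_cone v b hfk
    have hcoord : ∀ q : (Fin n × Fin n) ⊕ Unit,
        Sum.elim (fun p => if edge p then (1:ℝ) else 0) (fun _ => d) q =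
          ∑ k, c k * v k q := by
      intro q
      rw [← euclid_coord v c q, ← hcb]
      rfl
    set x : Finset (Fin n) → ℝ := fun S => if clique S then c (Sum.inl S) else 0 with hx
    refine ⟨x, ?_, ?_, ?_, ?_⟩
    · intro S
      rw [hx]
      dsimp only
      split_ifs with h
      · exact hcnn _
      · exact le_rfl
    · intro S hS
      rw [hx] at hS
      dsimp only at hS
      by_cases h : clique S
      · exact h
      · rw [if_neg h] at hS
        exact absurd rfl hS
    · -- cover constraint
      intro i j hne hpos
      have hmkapp : ∀ (f : ((Fin n × Fin n) ⊕ Unit) → ℝ) q, mk f q = f q := fun f q => rfl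
      have hedgep : edge (i, j) := ⟨hne, hpos⟩
      have hq := hcoord (Sum.inl (i, j))
      rw [Fintype.sum_sum_type, Fintype.sum_sum_type, Sum.elim_inl, if_pos hedgep] at hq
      have hS1 : ∀ S : Finset (Fin n),
          c (Sum.inl S) * v (Sum.inl S) (Sum.inl (i, j)) =
            (if i ∈ S ∧ j ∈ S then x S else 0) := by
        intro S
        rw [hv, Sum.elim_inl]
        by_cases hcl : clique S
        · rw [if_pos hcl, hmkapp, Sum.elim_inl]
          by_cases hmem : i ∈ S ∧ j ∈ S
          · rw [if_pos (⟨hedgep, hmem.1, hmem.2⟩ :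
                edge (i, j) ∧ (i, j).1 ∈ S ∧ (i, j).2 ∈ S), if_pos hmem, mul_one, hx]
            dsimp only
            rw [if_pos hcl]
          · rw [if_neg (fun hc => hmem ⟨hc.2.1, hc.2.2⟩), if_neg hmem, mul_zero]
        · rw [if_neg hcl, hmkapp, mul_zero]
          by_cases hmem : i ∈ S ∧ j ∈ S
          · rw [if_pos hmem, hx]
            dsimp only
            rw [if_neg hcl]
          · rw [if_neg hmem]
      have hS2 : ∀ p' : Fin n × Fin n,
          c (Sum.inr (Sum.inl p')) * v (Sum.inr (Sum.inl p')) (Sum.inl (i, j)) =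
            (if (i, j) = p' then -c (Sum.inr (Sum.inl p')) else 0) := by
        intro p'
        rw [hv, Sum.elim_inr, Sum.elim_inl, hmkapp, Sum.elim_inl]
        by_cases h : (i, j) = p'
        · rw [if_pos h, if_pos h]
          ring
        · rw [if_neg h, if_neg h, mul_zero]
      have hS3 : ∀ u : Unit,
          c (Sum.inr (Sum.inr u)) * v (Sum.inr (Sum.inr u)) (Sum.inl (i, j)) = 0 := by
        intro u
        rw [hv, Sum.elim_inr, Sum.elim_inr, hmkapp, Sum.elim_inl, mul_zero]
      rw [Finset.sum_congr rfl fun S _ => hS1 S,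
        Finset.sum_congr rfl fun p' _ => hS2 p',
        Finset.sum_congr rfl fun u _ => hS3 u] at hq
      rw [Finset.sum_ite_eq Finset.univ (i, j)
        (fun p' => -c (Sum.inr (Sum.inl p')))] at hq
      simp only [Finset.mem_univ, if_true, Finset.sum_const_zero, add_zero] at hq
      have hcs := hcnn (Sum.inr (Sum.inl (i, j)))
      linarith
    · -- total weight
      have hmkapp : ∀ (f : ((Fin n × Fin n) ⊕ Unit) → ℝ) q, mk f q = f q := fun f q => rfl
      have hq := hcoord (Sum.inr ())
      rw [Fintype.sum_sum_type, Fintype.sum_sum_type, Sum.elim_inr] at hq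
      have hS1 : ∀ S : Finset (Fin n),
          c (Sum.inl S) * v (Sum.inl S) (Sum.inr ()) = x S := by
        intro S
        rw [hv, Sum.elim_inl, hx]
        dsimp only
        by_cases hcl : clique S
        · rw [if_pos hcl, if_pos hcl, hmkapp, Sum.elim_inr, mul_one]
        · rw [if_neg hcl, if_neg hcl, hmkapp, mul_zero]
      have hS2 : ∀ p' : Fin n × Fin n,
          c (Sum.inr (Sum.inl p')) * v (Sum.inr (Sum.inl p')) (Sum.inr ()) = 0 := by
        intro p'
        rw [hv, Sum.elim_inr, Sum.elim_inl, hmkapp, Sum.elim_inr, mul_zero]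
      have hS3 : ∀ u : Unit,
          c (Sum.inr (Sum.inr u)) * v (Sum.inr (Sum.inr u)) (Sum.inr ()) =
            c (Sum.inr (Sum.inr u)) := by
        intro u
        rw [hv, Sum.elim_inr, Sum.elim_inr, hmkapp, Sum.elim_inr, mul_one]
      rw [Finset.sum_congr rfl fun S _ => hS1 S,
        Finset.sum_congr rfl fun p' _ => hS2 p',
        Finset.sum_congr rfl fun u _ => hS3 u] at hq
      simp only [Finset.sum_const_zero, zero_add] at hq
      have hunit : ∑ u : Unit, c (Sum.inr (Sum.inr u)) = c (Sum.inr (Sum.inr ())) :=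
        Fintype.sum_unique _
      rw [hunit] at hq
      have hcs := hcnn (Sum.inr (Sum.inr ()))
      linarith
  obtain ⟨x, hx1, hx2, hx3, hx4⟩ := hex
  have hmem : (∑ S : Finset (Fin n), x S) ∈ {s : ℝ | ∃ x : Finset (Fin n) → ℝ,
      (∀ S, 0 ≤ x S) ∧
      (∀ S, x S ≠ 0 → ∀ i ∈ S, ∀ j ∈ S, 0 < A i j) ∧
      (∀ i j, i ≠ j → 0 < A i j →
        1 ≤ ∑ S : Finset (Fin n), if i ∈ S ∧ j ∈ S then x S else 0) ∧
      s = ∑ S : Finset (Fin n), x S} := ⟨x, hx1, hx2, hx3, rfl⟩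
  have hbdd : BddBelow {s : ℝ | ∃ x : Finset (Fin n) → ℝ,
      (∀ S, 0 ≤ x S) ∧
      (∀ S, x S ≠ 0 → ∀ i ∈ S, ∀ j ∈ S, 0 < A i j) ∧
      (∀ i j, i ≠ j → 0 < A i j →
        1 ≤ ∑ S : Finset (Fin n), if i ∈ S ∧ j ∈ S then x S else 0) ∧
      s = ∑ S : Finset (Fin n), x S} := by
    refine ⟨0, ?_⟩
    rintro s ⟨x', hx'1, _, _, rfl⟩
    exact Finset.sum_nonneg fun S _ => hx'1 S
  calc sInf _ ≤ ∑ S : Finset (Fin n), x S := csInf_le hbdd hmem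
    _ ≤ d := hx4
    _ ≤ tauCp A := hd_le
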